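/- The dissimilarity index D4 does not satisfy the triangle inequality: there exist 3×3 pairwise comparison matrices A, B, C such that D4(A,C) > D4(A,B) + D4(B,C). Concretely, one may take A with rows (1,2,1),(1/2,1,1),(1,1,1), B with rows (1,3,1),(1/3,1,1),(1,1,1), and C with rows (1,4,1),(1/4,1,1),(1,1,1), for which D4(A,B) = 1/6, D4(B,C) = 1/9, and D4(A,C) = 1/3 > 5/18. -/

import Mathlib

/-- An `n × n` real matrix is a pairwise comparison matrix (PCM) if all entries are
positive and it is reciprocal: `A j i = 1 / A i j`. -/
def IsPCM {n : ℕ} (A : Matrix (Fin n) (Fin n) ℝ) : Prop :=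
  ∀ i j, 0 < A i j ∧ A j i = 1 / A i j

/-- The dissimilarity index `D4`, summing over the pairs `i < j` above the diagonal. -/
noncomputable def D4 {n : ℕ} (A B : Matrix (Fin n) (Fin n) ℝ) : ℝ :=
  (2 / ((n : ℝ) * ((n : ℝ) - 1))) *
    ∑ i, ∑ j, if i < j then max (A i j * B j i) (A j i * B i j) - 1 else 0

/-- `D4` does not satisfy the triangle inequality: for the concrete `3 × 3` PCMs below,
`D4(A,B) = 1/6`, `D4(B,C) = 1/9`, `D4(A,C) = 1/3 > 5/18 = D4(A,B) + D4(B,C)`. -/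
theorem D4_not_triangle_inequality :
    ∃ A B C : Matrix (Fin 3) (Fin 3) ℝ,
      A = !![1, 2, 1; 1/2, 1, 1; 1, 1, 1] ∧
      B = !![1, 3, 1; 1/3, 1, 1; 1, 1, 1] ∧
      C = !![1, 4, 1; 1/4, 1, 1; 1, 1, 1] ∧
      IsPCM A ∧ IsPCM B ∧ IsPCM C ∧
      D4 A B = 1/6 ∧ D4 B C = 1/9 ∧ D4 A C = 1/3 ∧
      D4 A C > D4 A B + D4 B C := by
  refine ⟨_, _, _, rfl, rfl, rfl, ?_, ?_, ?_, ?_, ?_, ?_, ?_⟩ <;>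
  first
    | (intro i j; fin_cases i <;> fin_cases j <;>
        norm_num [Matrix.cons_val_zero, Matrix.cons_val_one, Matrix.head_cons])
    | (simp only [D4, Fin.sum_univ_three, Fin.lt_def]; norm_num [max_def, Matrix.vecHead, Matrix.vecTail, Matrix.cons_val_zero, Matrix.cons_val_one, Matrix.cons_val_two, Matrix.head_cons, Matrix.tail_cons])
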